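/- Let w : P → ℝ≥0 on a finite packet set P, and consider the greedy OPS placement with buffer slots 0,…,b−1 at time t (each packet p placeable in slots ≤ min(t_p − t, b−1), processed in non-increasing value order, each placed in the highest-indexed feasible empty slot). Then in the resulting placement, for every placed packet p in slot i, every slot j with i ≤ j ≤ min(t_p − t, b−1) is occupied by a packet of value at least w_p. -/

import Mathlib

/-- One step of the OPS greedy placement: place packet `p` into the
highest-indexed empty buffer slot `i < b` with `i ≤ min (c p) (b - 1)`,
discarding `p` if no such slot exists. -/
def opsPlace {P : Type*} (c : P → ℕ) (b : ℕ) (q : ℕ → Option P) (p : P) :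
    ℕ → Option P :=
  match ((List.range b).filter
      (fun i => decide (i ≤ min (c p) (b - 1)) && (q i).isNone)).max? with
  | some i => Function.update q i (some p)
  | none => q

/-- The OPS greedy placement obtained by processing the packets of `L` in order,
starting from an empty buffer. -/
def opsGreedy {P : Type*} (c : P → ℕ) (b : ℕ) (L : List P) : ℕ → Option P :=
  L.foldl (opsPlace c b) (fun _ => none)

section Aux

variable {P : Type*} [DecidableEq P] (w : P → ℝ) (c : P → ℕ) (b : ℕ)

/-- The structural invariant. -/
def OpsStruct (q : ℕ → Option P) : Prop :=
  ∀ p i, q i = some p → ∀ j, i ≤ j → j ≤ min (c p) (b - 1) →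
    ∃ p', q j = some p' ∧ w p ≤ w p'

lemma opsPlace_step (q : ℕ → Option P) (r : P)
    (hS : OpsStruct w c b q)
    (hle : ∀ i p, q i = some p → w r ≤ w p) :
    OpsStruct w c b (opsPlace c b q r) ∧
      (∀ i p, opsPlace c b q r i = some p → w r ≤ w p) := by
  cases hmax : ((List.range b).filter
      (fun i => decide (i ≤ min (c r) (b - 1)) && (q i).isNone)).max? with
  | none =>
    have hq : opsPlace c b q r = q := by unfold opsPlace; rw [hmax]
    rw [hq]; exact ⟨hS, hle⟩
  | some m =>
    have hq : opsPlace c b q r = Function.update q m (some r) := by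
      unfold opsPlace; rw [hmax]
    rw [hq]
    rw [List.max?_eq_some_iff] at hmax
    obtain ⟨hmem, hmaxle⟩ := hmax
    simp only [List.mem_filter, List.mem_range, Bool.and_eq_true,
      decide_eq_true_eq, Option.isNone_iff_eq_none] at hmem
    obtain ⟨hmb, hmle, hmnone⟩ := hmem
    have hfull : ∀ j, m < j → j ≤ min (c r) (b - 1) → ∃ p', q j = some p' := by
      intro j hmj hjle
      cases hqj : q j with
      | some p' => exact ⟨p', rfl⟩
      | none =>
        exfalso
        obtain ⟨hjc, hjb1⟩ := le_min_iff.mp hjle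
        have hjb : j < b := by omega
        have : j ≤ m := by
          apply hmaxle
          simp [List.mem_filter, List.mem_range, hjb, hjc, hjb1, hqj]
        omega
    constructor
    · intro p i hpi j hij hjle
      by_cases him : i = m
      · subst him
        have hpr : p = r := by
          have := hpi; rw [Function.update_self] at this
          exact (Option.some.inj this).symm
        subst hpr
        rcases eq_or_lt_of_le hij with h | h
        · subst h
          exact ⟨p, Function.update_self _ _ _, le_refl _⟩
        · obtain ⟨p', hp'⟩ := hfull j h hjle
          refine ⟨p', ?_, hle j p' hp'⟩
          rw [Function.update_of_ne (by omega)]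
          exact hp'
      · rw [Function.update_of_ne him] at hpi
        obtain ⟨p', hp', hwp'⟩ := hS p i hpi j hij hjle
        have hjm : j ≠ m := by
          intro h; rw [h, hmnone] at hp'; exact absurd hp' (by simp)
        exact ⟨p', by rw [Function.update_of_ne hjm]; exact hp', hwp'⟩
    · intro i p hpi
      by_cases him : i = m
      · subst him
        rw [Function.update_self] at hpi
        exact le_of_eq (congrArg w (Option.some.inj hpi))
      · rw [Function.update_of_ne him] at hpi
        exact hle i p hpi

lemma foldl_struct : ∀ (L : List P) (q : ℕ → Option P),
    L.Pairwise (fun p q => w q ≤ w p) →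
    (∀ s ∈ L, ∀ i p, q i = some p → w s ≤ w p) →
    OpsStruct w c b q →
    OpsStruct w c b (L.foldl (opsPlace c b) q) := by
  intro L
  induction L with
  | nil => intro q _ _ hS; exact hS
  | cons r L ih =>
    intro q hpw h2 hS
    rw [List.pairwise_cons] at hpw
    obtain ⟨hstep, hstep2⟩ := opsPlace_step w c b q r hS
      (h2 r List.mem_cons_self)
    refine ih (opsPlace c b q r) hpw.2 ?_ hstep
    intro s hs i p hpi
    exact le_trans (hpw.1 s hs) (hstep2 i p hpi)

end Aux

/-- Structural property of OPS. -/
theorem ops_structural {P : Type*} [DecidableEq P] (w : P → ℝ) (c : P → ℕ) (b : ℕ)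
    (L : List P) (hnd : L.Nodup)
    (hsorted : L.Pairwise (fun p q => w q < w p ∨ (w p = w q ∧ c q ≤ c p)))
    (p : P) (i : ℕ) (hp : opsGreedy c b L i = some p) :
    ∀ j, i ≤ j → j ≤ min (c p) (b - 1) →
      ∃ p', opsGreedy c b L j = some p' ∧ w p ≤ w p' := by
  have hpw : L.Pairwise (fun p q => w q ≤ w p) :=
    hsorted.imp (fun h => h.elim le_of_lt (fun h => le_of_eq h.1.symm))
  have := foldl_struct w c b L (fun _ => none) hpw
    (fun s _ i p h => by simp at h)
    (fun p i h _ _ _ => by simp at h)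
  exact this p i hp
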